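/- arXiv:1601.06599 — 4 statements merged into one kernel-verified Lean document; each statement's English description precedes it below -/
import Mathlib

section
/- Let k ≥ 2 and n ≥ 3k + 3. Set R = k(n−1)+1 and R' = C(k,2)+1 if k is odd, R' = k(n−1)/2 + 1 if k is even. Let H be a graph on R + t vertices, where 0 ≤ t ≤ ⌊(kn − 2k²)/(k+1)²⌋. If e(H) ≥ R·t + C(t,2) + R', then H contains t+1 pairwise disjoint vertex subsets A₁, …, A_{t+1}, each of size k+1, such that for each i the induced subgraph H[A_i] has minimum degree at least 1. -/
open SimpleGraph

/-- `H` contains a copy of `G`, i.e. there is an injective graph homomorphism `G →g H`. -/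
def ContainsCopy {α β : Type*} (G : SimpleGraph α) (H : SimpleGraph β) : Prop :=
  ∃ f : G →g H, Function.Injective f

/-- `F ⟶ (G, H)` : for every red-blue colouring of the edges of `F` (encoded by the red
subgraph `R ≤ F`, the blue edges being `F \ R`) there is a red copy of `G` or a blue copy
of `H`. -/
def Arrows {γ α β : Type*} (F : SimpleGraph γ) (G : SimpleGraph α) (H : SimpleGraph β) : Prop :=
  ∀ R : SimpleGraph γ, R ≤ F → ContainsCopy G R ∨ ContainsCopy H (F \ R)

/-- The Ramsey number `r(G, H)` : the least `n` such that `K_n ⟶ (G, H)`. -/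
noncomputable def ramseyNumber {α β : Type*} (G : SimpleGraph α) (H : SimpleGraph β) : ℕ :=
  sInf {n : ℕ | Arrows (⊤ : SimpleGraph (Fin n)) G H}

/-- The size Ramsey number `r̂(G, H)` : the least number of edges of a graph `F` with
`F ⟶ (G, H)`. -/
noncomputable def sizeRamsey {α β : Type*} (G : SimpleGraph α) (H : SimpleGraph β) : ℕ :=
  sInf {m : ℕ | ∃ (N : ℕ) (F : SimpleGraph (Fin N)), Arrows F G H ∧ F.edgeSet.ncard = m}

/-- The restricted size Ramsey number `r̂*(G, H)` : the least number of edges of a graph `F`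
on exactly `r(G, H)` vertices with `F ⟶ (G, H)`. -/
noncomputable def restrictedSizeRamsey {α β : Type*} (G : SimpleGraph α) (H : SimpleGraph β) : ℕ :=
  sInf {m : ℕ | ∃ F : SimpleGraph (Fin (ramseyNumber G H)),
    Arrows F G H ∧ F.edgeSet.ncard = m}

/-- The star `K_{1,k}` with `k` edges. -/
def starGraph (k : ℕ) : SimpleGraph (Fin 1 ⊕ Fin k) := completeBipartiteGraph (Fin 1) (Fin k)

section StmtAux
attribute [local instance] Classical.propDecidable

set_option linter.unusedSectionVars false

variable {V : Type*} [Fintype V]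

/-- vertices with at least one neighbour -/
noncomputable def NIF (G : SimpleGraph V) : Finset V :=
  Finset.univ.filter (fun v => ∃ u, G.Adj v u)

/-- every vertex of `A` has a neighbour in `A` -/
def Nice (G : SimpleGraph V) (A : Finset V) : Prop := ∀ v ∈ A, ∃ u ∈ A, G.Adj v u

/-- delete all edges touching `A` -/
def delA (G : SimpleGraph V) (A : Finset V) : SimpleGraph V where
  Adj x y := G.Adj x y ∧ x ∉ A ∧ y ∉ A
  symm := ⟨fun x y h => ⟨h.1.symm, h.2.2, h.2.1⟩⟩
  loopless := ⟨fun x h => G.loopless.irrefl x h.1⟩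

lemma delA_le {G : SimpleGraph V} {A : Finset V} : ∀ {x y}, (delA G A).Adj x y → G.Adj x y :=
  fun h => h.1

lemma nice_union {G : SimpleGraph V} {A B : Finset V} (hA : Nice G A) (hB : Nice G B) :
    Nice G (A ∪ B) := by
  intro v hv
  rcases Finset.mem_union.1 hv with h | h
  · obtain ⟨u, hu, hadj⟩ := hA v h
    exact ⟨u, Finset.mem_union_left _ hu, hadj⟩
  · obtain ⟨u, hu, hadj⟩ := hB v h
    exact ⟨u, Finset.mem_union_right _ hu, hadj⟩

lemma nice_mono {G G' : SimpleGraph V} (h : ∀ {x y}, G'.Adj x y → G.Adj x y) {A : Finset V}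
    (hA : Nice G' A) : Nice G A := by
  intro v hv
  obtain ⟨u, hu, hadj⟩ := hA v hv
  exact ⟨u, hu, h hadj⟩

lemma nice_subset_NIF {G : SimpleGraph V} {A : Finset V} (hA : Nice G A) : A ⊆ NIF G := by
  intro v hv
  obtain ⟨u, _, hadj⟩ := hA v hv
  exact Finset.mem_filter.2 ⟨Finset.mem_univ _, ⟨u, hadj⟩⟩

lemma degree_le_NIF {G : SimpleGraph V} {v : V} (hv : v ∈ NIF G) :
    G.degree v + 1 ≤ (NIF G).card := by
  have h1 : G.neighborFinset v ⊆ (NIF G).erase v := by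
    intro u hu
    rw [SimpleGraph.mem_neighborFinset] at hu
    refine Finset.mem_erase.2 ⟨(G.ne_of_adj hu.symm), ?_⟩
    exact Finset.mem_filter.2 ⟨Finset.mem_univ _, ⟨v, hu.symm⟩⟩
  have h2 := Finset.card_le_card h1
  rw [SimpleGraph.card_neighborFinset_eq_degree] at h2
  have h3 := Finset.card_erase_add_one hv
  omega

lemma degree_zero_of_not_mem_NIF {G : SimpleGraph V} {v : V} (hv : v ∉ NIF G) :
    G.degree v = 0 := by
  rw [← SimpleGraph.card_neighborFinset_eq_degree, Finset.card_eq_zero]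
  refine Finset.eq_empty_of_forall_notMem (fun u hu => ?_)
  rw [SimpleGraph.mem_neighborFinset] at hu
  exact hv (Finset.mem_filter.2 ⟨Finset.mem_univ _, ⟨u, hu⟩⟩)

lemma sum_deg_NIF (G : SimpleGraph V) :
    ∑ v ∈ NIF G, G.degree v = 2 * G.edgeFinset.card := by
  rw [← SimpleGraph.sum_degrees_eq_twice_card_edges]
  exact Finset.sum_subset (Finset.subset_univ _)
    (fun v _ hv => degree_zero_of_not_mem_NIF hv)

lemma edge_del_le (G : SimpleGraph V) (A : Finset V) :
    G.edgeFinset.card ≤ (delA G A).edgeFinset.card + ∑ a ∈ A, G.degree a := by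
  classical
  have hsub : G.edgeFinset ⊆ (delA G A).edgeFinset ∪ A.biUnion (fun a => G.incidenceFinset a) := by
    intro e he
    induction e with
    | h x y =>
      rw [SimpleGraph.mem_edgeFinset, SimpleGraph.mem_edgeSet] at he
      by_cases hx : x ∈ A
      · refine Finset.mem_union_right _ (Finset.mem_biUnion.2 ⟨x, hx, ?_⟩)
        rw [SimpleGraph.mem_incidenceFinset]
        exact ⟨he, Sym2.mem_mk_left x y⟩
      by_cases hy : y ∈ A
      · refine Finset.mem_union_right _ (Finset.mem_biUnion.2 ⟨y, hy, ?_⟩)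
        rw [SimpleGraph.mem_incidenceFinset]
        exact ⟨he, Sym2.mem_mk_right x y⟩
      · refine Finset.mem_union_left _ ?_
        rw [SimpleGraph.mem_edgeFinset, SimpleGraph.mem_edgeSet]
        exact ⟨he, hx, hy⟩
  calc G.edgeFinset.card
      ≤ ((delA G A).edgeFinset ∪ A.biUnion (fun a => G.incidenceFinset a)).card :=
        Finset.card_le_card hsub
    _ ≤ (delA G A).edgeFinset.card + (A.biUnion (fun a => G.incidenceFinset a)).card :=
        Finset.card_union_le _ _
    _ ≤ (delA G A).edgeFinset.card + ∑ a ∈ A, (G.incidenceFinset a).card :=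
        Nat.add_le_add_left (Finset.card_biUnion_le) _
    _ = (delA G A).edgeFinset.card + ∑ a ∈ A, G.degree a := by
        congr 1
        exact Finset.sum_congr rfl (fun a _ => G.card_incidenceFinset_eq_degree a)

lemma NIF_delA (G : SimpleGraph V) (A : Finset V) : NIF (delA G A) ⊆ NIF G \ A := by
  intro v hv
  obtain ⟨u, hu⟩ := (Finset.mem_filter.1 hv).2
  exact Finset.mem_sdiff.2 ⟨Finset.mem_filter.2 ⟨Finset.mem_univ _, ⟨u, hu.1⟩⟩, hu.2.1⟩

lemma NIF_delA_card {G : SimpleGraph V} {A : Finset V} (hA : A ⊆ NIF G) :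
    (NIF (delA G A)).card + A.card ≤ (NIF G).card := by
  have h1 := Finset.card_le_card (NIF_delA G A)
  have h2 : (NIF G \ A).card = (NIF G).card - A.card := Finset.card_sdiff_of_subset hA
  have h3 := Finset.card_le_card hA
  omega

noncomputable def CompF (G : SimpleGraph V) (v : V) : Finset V :=
  Finset.univ.filter (fun u => G.connectedComponentMk u = G.connectedComponentMk v)

lemma mem_CompF {G : SimpleGraph V} {u v : V} :
    u ∈ CompF G v ↔ G.connectedComponentMk u = G.connectedComponentMk v := by
  simp [CompF]

lemma flexcomp {G : SimpleGraph V} {v u0 : V} (hv : G.Adj v u0) :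
    ∀ j, 2 ≤ j → j ≤ (CompF G v).card → ∃ A ⊆ CompF G v, Nice G A ∧ A.card = j := by
  intro j hj2
  induction j, hj2 using Nat.le_induction with
  | base =>
    intro _
    refine ⟨{v, u0}, ?_, ?_, ?_⟩
    · intro x hx
      rcases Finset.mem_insert.1 hx with rfl | hx
      · exact mem_CompF.2 rfl
      · rw [Finset.mem_singleton] at hx; subst hx
        exact mem_CompF.2 (ConnectedComponent.eq.2 hv.symm.reachable)
    · intro x hx
      rcases Finset.mem_insert.1 hx with rfl | hx
      · exact ⟨u0, Finset.mem_insert_of_mem (Finset.mem_singleton_self _), hv⟩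
      · rw [Finset.mem_singleton] at hx; subst hx
        exact ⟨v, Finset.mem_insert_self _ _, hv.symm⟩
    · rw [Finset.card_insert_of_notMem (by simp [G.ne_of_adj hv]), Finset.card_singleton]
  | succ j hj2 ih =>
    intro hcard
    obtain ⟨A, hAsub, hAnice, hAcard⟩ := ih (le_trans (Nat.le_succ j) hcard)
    have hne : ¬ (CompF G v ⊆ A) := by
      intro h
      have := Finset.card_le_card h
      omega
    obtain ⟨y, hy, hyA⟩ := Finset.not_subset.1 hne
    have hA0 : A.Nonempty := Finset.card_pos.1 (by omega)
    obtain ⟨a0, ha0⟩ := hA0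
    have hreach : G.Reachable a0 y := by
      refine ConnectedComponent.eq.1 ?_
      rw [mem_CompF.1 (hAsub ha0), mem_CompF.1 hy]
    refine hreach.elim (fun p => ?_)
    obtain ⟨d, _, hd1, hd2⟩ := p.exists_boundary_dart (↑A) (Finset.mem_coe.2 ha0)
      (fun h => hyA (Finset.mem_coe.1 h))
    have hd1' : d.toProd.1 ∈ A := Finset.mem_coe.1 hd1
    have hd2' : d.toProd.2 ∉ A := fun h => hd2 (Finset.mem_coe.2 h)
    have hadj : G.Adj d.toProd.1 d.toProd.2 := d.adj
    refine ⟨insert d.toProd.2 A, ?_, ?_, ?_⟩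
    · intro x hx
      rcases Finset.mem_insert.1 hx with rfl | hx
      · refine mem_CompF.2 ?_
        rw [← mem_CompF.1 (hAsub hd1')]
        exact ConnectedComponent.eq.2 hadj.symm.reachable
      · exact hAsub hx
    · intro x hx
      rcases Finset.mem_insert.1 hx with rfl | hx
      · exact ⟨d.toProd.1, Finset.mem_insert_of_mem hd1', hadj.symm⟩
      · obtain ⟨u, hu, huadj⟩ := hAnice x hx
        exact ⟨u, Finset.mem_insert_of_mem hu, huadj⟩
    · rw [Finset.card_insert_of_notMem hd2', hAcard]

noncomputable def LU : List (Finset V) → Finset V := fun L => L.foldr (· ∪ ·) ∅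

lemma mem_LU {L : List (Finset V)} {x : V} : x ∈ LU L ↔ ∃ D ∈ L, x ∈ D := by
  induction L with
  | nil => simp [LU]
  | cons D L ih =>
    rw [LU] at ih ⊢
    simp [Finset.mem_union, ih]

lemma LU_cons {D : Finset V} {L : List (Finset V)} : LU (D :: L) = D ∪ LU L := rfl

lemma disjoint_LU {D : Finset V} {L : List (Finset V)} (h : ∀ D' ∈ L, Disjoint D D') :
    Disjoint D (LU L) := by
  rw [Finset.disjoint_right]
  intro x hx hxD
  obtain ⟨D', hD', hxD'⟩ := mem_LU.1 hx
  exact (Finset.disjoint_right.1 (h D' hD')) hxD' hxD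

lemma sel (G : SimpleGraph V) :
    ∀ (L : List (Finset V)), L.Pairwise Disjoint →
    (∀ D ∈ L, 2 ≤ D.card ∧ ∀ j, 2 ≤ j → j ≤ D.card → ∃ A ⊆ D, Nice G A ∧ A.card = j) →
    ∀ M, 2 ≤ M → M ≤ (L.map Finset.card).sum →
    (Even M ∨ ∃ D ∈ L, 3 ≤ D.card) →
    ∃ A, A ⊆ LU L ∧ Nice G A ∧ A.card = M := by
  intro L
  induction L with
  | nil =>
    intro _ _ M hM2 hMle _
    simp at hMle; omega
  | cons D L ih =>
    intro hpw hflex M hM2 hMle hpar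
    have hd : ∀ D' ∈ L, Disjoint D D' := (List.pairwise_cons.1 hpw).1
    have hpw' : L.Pairwise Disjoint := (List.pairwise_cons.1 hpw).2
    have hflexD := hflex D List.mem_cons_self
    have hflex' : ∀ D' ∈ L, 2 ≤ D'.card ∧ ∀ j, 2 ≤ j → j ≤ D'.card →
        ∃ A ⊆ D', Nice G A ∧ A.card = j := fun D' hD' => hflex D' (List.mem_cons_of_mem _ hD')
    have hc2 : 2 ≤ D.card := hflexD.1
    have hDdisLU : Disjoint D (LU L) := disjoint_LU hd
    have hsum : M ≤ D.card + (L.map Finset.card).sum := by simpa using hMle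
    have combine : ∀ j M', 2 ≤ j → j ≤ D.card → 2 ≤ M' → M' ≤ (L.map Finset.card).sum →
        (Even M' ∨ ∃ D' ∈ L, 3 ≤ D'.card) →
        ∃ A, A ⊆ LU (D :: L) ∧ Nice G A ∧ A.card = j + M' := by
      intro j M' hj2 hjle hM'2 hM'le hpar'
      obtain ⟨A0, hA0sub, hA0nice, hA0card⟩ := hflexD.2 j hj2 hjle
      obtain ⟨A', hA'sub, hA'nice, hA'card⟩ := ih hpw' hflex' M' hM'2 hM'le hpar'
      refine ⟨A0 ∪ A', ?_, nice_union hA0nice hA'nice, ?_⟩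
      · rw [LU_cons]
        exact Finset.union_subset (hA0sub.trans Finset.subset_union_left)
          (hA'sub.trans Finset.subset_union_right)
      · rw [Finset.card_union_of_disjoint
          (Finset.disjoint_of_subset_left hA0sub (Finset.disjoint_of_subset_right hA'sub hDdisLU))]
        omega
    by_cases hMc : M ≤ D.card
    · obtain ⟨A, hsub, hnice, hcard⟩ := hflexD.2 M hM2 hMc
      exact ⟨A, hsub.trans (by rw [LU_cons]; exact Finset.subset_union_left), hnice, hcard⟩
    · push_neg at hMc
      have hL'sum : 1 ≤ (L.map Finset.card).sum := by omega
      by_cases h1 : M = D.card + 1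
      · by_cases hc3 : 3 ≤ D.card
        · have hLne : L ≠ [] := by
            intro h; subst h; simp at hL'sum
          have h2sum : 2 ≤ (L.map Finset.card).sum := by
            obtain ⟨D', hD'⟩ := List.exists_mem_of_ne_nil L hLne
            have hD2 := (hflex' D' hD').1
            have hmem : D'.card ∈ L.map Finset.card := List.mem_map_of_mem hD'
            exact le_trans hD2 (List.single_le_sum (fun x _ => Nat.zero_le x) _ hmem)
          obtain ⟨A, hsub, hnice, hcard⟩ := combine (D.card - 1) 2 (by omega) (by omega)
            le_rfl h2sum (Or.inl even_two)
          exact ⟨A, hsub, hnice, by omega⟩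
        · have hpar2 : ∃ D' ∈ L, 3 ≤ D'.card := by
            rcases hpar with h | ⟨D0, hD0, hD03⟩
            · exfalso
              have : M % 2 = 0 := Nat.even_iff.1 h
              omega
            · rcases List.mem_cons.1 hD0 with rfl | h
              · omega
              · exact ⟨D0, h, hD03⟩
          obtain ⟨D0, hD0, hD03⟩ := hpar2
          have h3sum : 3 ≤ (L.map Finset.card).sum := by
            have hmem : D0.card ∈ L.map Finset.card := List.mem_map_of_mem hD0
            exact le_trans hD03 (List.single_le_sum (fun x _ => Nat.zero_le x) _ hmem)
          obtain ⟨A, hsub, hnice, hcard⟩ := ih hpw' hflex' 3 (by omega) h3sum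
            (Or.inr ⟨D0, hD0, hD03⟩)
          refine ⟨A, hsub.trans ?_, hnice, by omega⟩
          rw [LU_cons]; exact Finset.subset_union_right
      · by_cases hrec : (Even (M - D.card) ∨ ∃ D' ∈ L, 3 ≤ D'.card)
        · obtain ⟨A, hsub, hnice, hcard⟩ := combine D.card (M - D.card) hc2 le_rfl
            (by omega) (by omega) hrec
          exact ⟨A, hsub, hnice, by omega⟩
        · push_neg at hrec
          obtain ⟨hodd, hsmall⟩ := hrec
          have hodd' : (M - D.card) % 2 = 1 := by
            rcases Nat.even_or_odd (M - D.card) with he | ho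
            · exact absurd he hodd
            · exact Nat.odd_iff.1 ho
          have hall2 : ∀ D' ∈ L, D'.card = 2 := by
            intro D' h
            have h1 := (hflex' D' h).1
            have h2 := hsmall D' h
            omega
          have hc3 : 3 ≤ D.card := by
            by_contra hc
            have hDc : D.card = 2 := by omega
            have hevM : M % 2 = 0 := by
              rcases hpar with h | ⟨D0, hD0, hD03⟩
              · exact Nat.even_iff.1 h
              · rcases List.mem_cons.1 hD0 with rfl | h
                · omega
                · have := hall2 D0 h; omega
            omega
          have heven : (L.map Finset.card).sum % 2 = 0 := by
            have hdvd : 2 ∣ (L.map Finset.card).sum := by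
              refine List.dvd_sum ?_
              intro x hx
              obtain ⟨D', hD', rfl⟩ := List.mem_map.1 hx
              have := hall2 D' hD'; omega
            omega
          obtain ⟨A, hsub, hnice, hcard⟩ := combine (D.card - 1) (M - D.card + 1)
            (by omega) (by omega) (by omega) (by omega)
            (Or.inl (Nat.even_iff.2 (by omega)))
          exact ⟨A, hsub, hnice, by omega⟩

lemma matching (G : SimpleGraph V) (hdeg : ∀ v, G.degree v ≤ 1) :
    ∀ j, 2*j ≤ G.edgeFinset.card + 1 → ∃ A : Finset V, Nice G A ∧ A.card = 2*j := by
  intro j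
  induction j with
  | zero => intro _; exact ⟨∅, fun v hv => absurd hv (Finset.notMem_empty v), by simp⟩
  | succ j ih =>
    intro hj
    obtain ⟨A, hAnice, hAcard⟩ := ih (by omega)
    have hsum : ∑ a ∈ A, G.degree a ≤ 2*j := by
      calc ∑ a ∈ A, G.degree a ≤ A.card • 1 := Finset.sum_le_card_nsmul _ _ _ (fun x _ => hdeg x)
      _ = 2*j := by simp [hAcard]
    have hdel := edge_del_le G A
    have hpos : 1 ≤ (delA G A).edgeFinset.card := by omega
    have hne : ((delA G A).edgeFinset).Nonempty := Finset.card_pos.1 (by omega)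
    obtain ⟨e0, he0⟩ := hne
    obtain ⟨⟨x, y⟩, rfl⟩ := Quot.exists_rep e0
    rw [SimpleGraph.mem_edgeFinset] at he0
    have hadj : (delA G A).Adj x y := (SimpleGraph.mem_edgeSet _).1 he0
    have hxy : x ≠ y := (delA G A).ne_of_adj hadj
    have hxA : x ∉ A := hadj.2.1
    have hyA : y ∉ A := hadj.2.2
    refine ⟨insert x (insert y A), ?_, ?_⟩
    · intro w hw
      rcases Finset.mem_insert.1 hw with rfl | hw
      · exact ⟨y, Finset.mem_insert_of_mem (Finset.mem_insert_self _ _), hadj.1⟩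
      rcases Finset.mem_insert.1 hw with rfl | hw
      · exact ⟨x, Finset.mem_insert_self _ _, hadj.1.symm⟩
      · obtain ⟨u, hu, huadj⟩ := hAnice w hw
        exact ⟨u, Finset.mem_insert_of_mem (Finset.mem_insert_of_mem hu), huadj⟩
    · rw [Finset.card_insert_of_notMem (by simp [hxy, hxA]),
        Finset.card_insert_of_notMem (by simp [hyA]), hAcard]
      ring

lemma claimB (G : SimpleGraph V) (k : ℕ) (hk : 2 ≤ k)
    (hi : k.choose 2 + 1 ≤ G.edgeFinset.card)
    (hii : Odd k ∨ (NIF G).card + 1 ≤ 2 * G.edgeFinset.card) :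
    ∃ A : Finset V, Nice G A ∧ A.card = k + 1 := by
  have h2ch : 2 * k.choose 2 = k * (k-1) := by
    rw [Nat.choose_two_right]
    obtain ⟨c, hc⟩ := Nat.even_mul_pred_self k
    omega
  by_cases hbig : ∃ v, 2 ≤ G.degree v
  · obtain ⟨v, hv2⟩ := hbig
    have h1lt : 1 < (G.neighborFinset v).card := by
      rw [SimpleGraph.card_neighborFinset_eq_degree]; omega
    obtain ⟨a, ha, b, hb, hab⟩ := Finset.one_lt_card.1 h1lt
    rw [SimpleGraph.mem_neighborFinset] at ha hb
    have hvNI : v ∈ NIF G := Finset.mem_filter.2 ⟨Finset.mem_univ _, ⟨a, ha⟩⟩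
    have hNI : k + 1 ≤ (NIF G).card := by
      by_contra hle
      push_neg at hle
      have hsum := sum_deg_NIF G
      have hbd : ∑ w ∈ NIF G, G.degree w ≤ (NIF G).card • ((NIF G).card - 1) :=
        Finset.sum_le_card_nsmul _ _ _ (fun x hx => by have := degree_le_NIF hx; omega)
      rw [smul_eq_mul] at hbd
      have hmul : (NIF G).card * ((NIF G).card - 1) ≤ k * (k-1) :=
        Nat.mul_le_mul (by omega) (by omega)
      omega
    have hvComp3 : 3 ≤ (CompF G v).card := by
      have hsub : ({v, a, b} : Finset V) ⊆ CompF G v := by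
        intro x hx
        rcases Finset.mem_insert.1 hx with rfl | hx
        · exact mem_CompF.2 rfl
        rcases Finset.mem_insert.1 hx with rfl | hx
        · exact mem_CompF.2 (ConnectedComponent.eq.2 ha.symm.reachable)
        · rw [Finset.mem_singleton] at hx; subst hx
          exact mem_CompF.2 (ConnectedComponent.eq.2 hb.symm.reachable)
      have hcard3 : ({v, a, b} : Finset V).card = 3 := by
        rw [Finset.card_insert_of_notMem (by simp [G.ne_of_adj ha, G.ne_of_adj hb]),
          Finset.card_insert_of_notMem (by simp [hab]), Finset.card_singleton]
      rw [← hcard3]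
      exact Finset.card_le_card hsub
    have hpw : ((NIF G).image (fun w => CompF G w)).toList.Pairwise Disjoint := by
      refine (Finset.nodup_toList _).pairwise_of_forall_ne ?_
      intro D hD D' hD' hne
      rw [Finset.mem_toList, Finset.mem_image] at hD hD'
      obtain ⟨w, hw, rfl⟩ := hD
      obtain ⟨w', hw', rfl⟩ := hD'
      rw [Finset.disjoint_left]
      intro x hx hx'
      refine hne ?_
      have h1 := mem_CompF.1 hx
      have h2 := mem_CompF.1 hx'
      ext u
      rw [mem_CompF, mem_CompF, ← h1, ← h2]
    have hflexL : ∀ D ∈ ((NIF G).image (fun w => CompF G w)).toList, 2 ≤ D.card ∧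
        ∀ j, 2 ≤ j → j ≤ D.card → ∃ A ⊆ D, Nice G A ∧ A.card = j := by
      intro D hD
      rw [Finset.mem_toList, Finset.mem_image] at hD
      obtain ⟨w, hw, rfl⟩ := hD
      obtain ⟨u, huadj⟩ := (Finset.mem_filter.1 hw).2
      constructor
      · have hsub : ({w, u} : Finset V) ⊆ CompF G w := by
          intro x hx
          rcases Finset.mem_insert.1 hx with rfl | hx
          · exact mem_CompF.2 rfl
          · rw [Finset.mem_singleton] at hx; subst hx
            exact mem_CompF.2 (ConnectedComponent.eq.2 huadj.symm.reachable)
        have hc2 : ({w, u} : Finset V).card = 2 := by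
          rw [Finset.card_insert_of_notMem (by simp [G.ne_of_adj huadj]),
            Finset.card_singleton]
        rw [← hc2]
        exact Finset.card_le_card hsub
      · exact flexcomp huadj
    have hsumL : k + 1 ≤ ((((NIF G).image (fun w => CompF G w)).toList).map Finset.card).sum := by
      have hsub : NIF G ⊆ ((NIF G).image (fun w => CompF G w)).biUnion id := by
        intro w hw
        exact Finset.mem_biUnion.2 ⟨CompF G w, Finset.mem_image_of_mem _ hw, mem_CompF.2 rfl⟩
      have h1 := Finset.card_le_card hsub
      have h2 := Finset.card_biUnion_le (s := (NIF G).image (fun w => CompF G w))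
        (t := id)
      have h3 : ((((NIF G).image (fun w => CompF G w)).toList).map Finset.card).sum
          = ∑ D ∈ (NIF G).image (fun w => CompF G w), D.card :=
        Finset.sum_map_toList _ Finset.card
      simp only [id] at h2
      omega
    obtain ⟨A, _, hnice, hcard⟩ := sel G _ hpw hflexL (k+1) (by omega) hsumL
      (Or.inr ⟨CompF G v, Finset.mem_toList.2 (Finset.mem_image_of_mem _ hvNI), hvComp3⟩)
    exact ⟨A, hnice, hcard⟩
  · push_neg at hbig
    have hdeg : ∀ v, G.degree v ≤ 1 := fun v => by have := hbig v; omega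
    rcases hii with hodd | hev
    · obtain ⟨c, hc⟩ := hodd
      have hke : k * (k-1) ≥ 2 * (k-1) := Nat.mul_le_mul_right (k-1) hk
      obtain ⟨A, hnice, hcard⟩ := matching G hdeg (c+1) (by omega)
      exact ⟨A, hnice, by omega⟩
    · exfalso
      have hsum := sum_deg_NIF G
      have hbd : ∑ w ∈ NIF G, G.degree w ≤ (NIF G).card • 1 :=
        Finset.sum_le_card_nsmul _ _ _ (fun x _ => hdeg x)
      rw [smul_eq_mul, mul_one] at hbd
      omega

lemma cons_family_disj {p : ℕ} (A0 : Finset V) (A : Fin (p+1) → Finset V)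
    (hd : ∀ i j, i ≠ j → Disjoint (A i) (A j)) (h0 : ∀ i, Disjoint A0 (A i)) :
    ∀ i j : Fin (p+2), i ≠ j →
      Disjoint ((Fin.cons A0 A : Fin (p+2) → Finset V) i) ((Fin.cons A0 A : Fin (p+2) → Finset V) j) := by
  intro i j hij
  rcases Fin.eq_zero_or_eq_succ i with rfl | ⟨i', rfl⟩ <;>
    rcases Fin.eq_zero_or_eq_succ j with rfl | ⟨j', rfl⟩
  · exact absurd rfl hij
  · simpa using h0 j'
  · simpa using (h0 i').symm
  · have hne : i' ≠ j' := fun h => hij (by rw [h])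
    simpa using hd i' j' hne

lemma ML (k R' : ℕ) (hk : 2 ≤ k) (hB : k.choose 2 + 1 ≤ R') :
    ∀ (p : ℕ) (G : SimpleGraph V) (μ : ℕ),
      (NIF G).card ≤ μ →
      p*(μ-1) + R' ≤ G.edgeFinset.card + p.choose 2 →
      (¬ Odd k → (NIF G).card + 1 ≤ 2*R' + p) →
      p*(k+1)^2 + k^2 ≤ μ →
      ∃ A : Fin (p+1) → Finset V, (∀ i j, i ≠ j → Disjoint (A i) (A j)) ∧
        (∀ i, (A i).card = k+1) ∧ (∀ i, Nice G (A i)) := by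
  have hksq : k + 2 ≤ (k+1)^2 := by
    have h1 : (k+1)^2 = k*k + 2*k + 1 := by ring
    omega
  have hk9 : 9 ≤ (k+1)^2 := by
    calc (9:ℕ) = 3^2 := by norm_num
    _ ≤ (k+1)^2 := Nat.pow_le_pow_left (by omega) 2
  intro p
  induction p with
  | zero =>
    intro G μ hN hA hC hD
    have hA' : R' ≤ G.edgeFinset.card := by simpa using hA
    have hii2 : Odd k ∨ (NIF G).card + 1 ≤ 2 * G.edgeFinset.card := by
      by_cases hko : Odd k
      · exact Or.inl hko
      · right
        have := hC hko
        omega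
    obtain ⟨A0, hnice, hcard⟩ := claimB G k hk (by omega) hii2
    refine ⟨fun _ => A0, ?_, fun _ => hcard, fun _ => hnice⟩
    intro i j hij
    exfalso
    apply hij
    have h1 := i.isLt
    have h2 := j.isLt
    ext
    omega
  | succ p ih =>
    intro G μ hN hA hC hD
    -- useful arithmetic facts
    have hchsucc : (p+1).choose 2 = p.choose 2 + p := by
      rw [Nat.choose_succ_succ, Nat.choose_one_right, Nat.add_comm]
    have hDexp : (p+1)*(k+1)^2 = p*(k+1)^2 + (k+1)^2 := by ring
    have hmu9 : 9*(p+1) ≤ μ := by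
      have h1 : (p+1)*9 ≤ (p+1)*(k+1)^2 := Nat.mul_le_mul_left _ hk9
      have h2 : (p+1)*9 = 9*(p+1) := by ring
      omega
    have hmu9' : 9*p + 9 ≤ μ := by omega
    have hmup : p + 2 ≤ μ := by omega
    -- lower bound on edges : e ≥ R' + stuff
    have hch2 : 2*(p+1).choose 2 = (p+1)*p := by
      rw [Nat.choose_two_right, Nat.succ_sub_one]
      obtain ⟨c, hc⟩ := Nat.even_mul_pred_self (p+1)
      rw [Nat.succ_sub_one] at hc
      omega
    have hmulp : (p+1)*p ≤ (p+1)*(μ-1) := Nat.mul_le_mul_left _ (by omega)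
    have heR' : R' + (p+1) ≤ G.edgeFinset.card + 1 := by
      -- since (p+1)(μ-1) ≥ 2*C(p+1,2) and (p+1)(μ-1) ≥ μ-1 ≥ p+1
      have h3 : μ - 1 ≤ (p+1)*(μ-1) := Nat.le_mul_of_pos_left _ (by omega)
      omega
    have hple : p ≤ p*(k+1) := Nat.le_mul_of_pos_right _ (by omega)
    by_cases hstar : ∃ v, (p+1)*(k+1) + k ≤ G.degree v
    · obtain ⟨v, hv⟩ := hstar
      have hvnbr : (G.neighborFinset v).Nonempty := by
        rw [← Finset.card_pos, SimpleGraph.card_neighborFinset_eq_degree]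
        have : 1 ≤ (p+1)*(k+1) + k := by omega
        omega
      obtain ⟨u0, hu0⟩ := hvnbr
      rw [SimpleGraph.mem_neighborFinset] at hu0
      have hvNI : v ∈ NIF G := Finset.mem_filter.2 ⟨Finset.mem_univ _, ⟨u0, hu0⟩⟩
      have hdegN : G.degree v + 1 ≤ (NIF G).card := degree_le_NIF hvNI
      have hdel := edge_del_le G {v}
      rw [Finset.sum_singleton] at hdel
      have hNd : (NIF (delA G {v})).card + 1 ≤ (NIF G).card := by
        have := NIF_delA_card (G := G) (A := {v}) (by simpa using hvNI)
        simpa using this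
      have hid1 : (p+1)*(μ-1) = p*(μ-2) + (μ-1) + p := by
        obtain ⟨w, rfl⟩ : ∃ w, μ = w + 2 := ⟨μ - 2, by omega⟩
        simp only [Nat.add_sub_cancel]
        have h1 : w + 2 - 1 = w + 1 := by omega
        rw [h1]; ring
      obtain ⟨A, hdisj, hcards, hnices⟩ := ih (delA G {v}) (μ - 1) (by omega)
        (by
          have h1 : μ - 1 - 1 = μ - 2 := by omega
          rw [h1]
          omega)
        (by
          intro hko
          have h1 := hC hko
          omega)
        (by omega)
      -- build the star at v
      have hUcard : ((Finset.univ : Finset (Fin (p+1))).biUnion A).card ≤ (p+1)*(k+1) := by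
        calc ((Finset.univ : Finset (Fin (p+1))).biUnion A).card
            ≤ ∑ i : Fin (p+1), (A i).card := Finset.card_biUnion_le
          _ = (p+1)*(k+1) := by
            rw [Finset.sum_congr rfl (fun i _ => hcards i)]
            simp [Finset.sum_const, Finset.card_univ]
      have hfree : k ≤ (G.neighborFinset v \ (Finset.univ : Finset (Fin (p+1))).biUnion A).card := by
        have h1 := Finset.card_le_card_sdiff_add_card (s := G.neighborFinset v)
          (t := (Finset.univ : Finset (Fin (p+1))).biUnion A)
        rw [SimpleGraph.card_neighborFinset_eq_degree] at *
        omega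
      obtain ⟨B, hBsub, hBcard⟩ := Finset.exists_subset_card_eq hfree
      have hBnbr : B ⊆ G.neighborFinset v := hBsub.trans (Finset.sdiff_subset)
      have hvB : v ∉ B := by
        intro hvB
        have := hBnbr hvB
        rw [SimpleGraph.mem_neighborFinset] at this
        exact G.loopless.irrefl v this
      have hAstarcard : (insert v B).card = k + 1 := by
        rw [Finset.card_insert_of_notMem hvB, hBcard]
      have hAstarnice : Nice G (insert v B) := by
        intro x hx
        rcases Finset.mem_insert.1 hx with rfl | hx
        · obtain ⟨b, hb⟩ := Finset.card_pos.1 (by omega : 0 < B.card)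
          have := hBnbr hb
          rw [SimpleGraph.mem_neighborFinset] at this
          exact ⟨b, Finset.mem_insert_of_mem hb, this⟩
        · have := hBnbr hx
          rw [SimpleGraph.mem_neighborFinset] at this
          exact ⟨v, Finset.mem_insert_self _ _, this.symm⟩
      have hvnotA : ∀ i, v ∉ A i := by
        intro i hvA
        have h1 : A i ⊆ NIF (delA G {v}) := nice_subset_NIF (hnices i)
        have h2 := NIF_delA G {v}
        have := h2 (h1 hvA)
        rw [Finset.mem_sdiff] at this
        simp at this
      have h0 : ∀ i, Disjoint (insert v B) (A i) := by
        intro i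
        rw [Finset.disjoint_left]
        intro x hx hxA
        rcases Finset.mem_insert.1 hx with rfl | hx
        · exact hvnotA i hxA
        · have := hBsub hx
          rw [Finset.mem_sdiff] at this
          exact this.2 (Finset.mem_biUnion.2 ⟨i, Finset.mem_univ _, hxA⟩)
      refine ⟨Fin.cons (insert v B) A, cons_family_disj _ _ hdisj h0, ?_, ?_⟩
      · intro i
        rcases Fin.eq_zero_or_eq_succ i with rfl | ⟨i', rfl⟩
        · simpa using hAstarcard
        · simpa using hcards i'
      · intro i
        rcases Fin.eq_zero_or_eq_succ i with rfl | ⟨i', rfl⟩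
        · simpa using hAstarnice
        · simpa using nice_mono (fun {x y} h => delA_le h) (hnices i')
    · push_neg at hstar
      have hsmall : ∀ v, G.degree v ≤ (p+1)*(k+1) + (k-1) := by
        intro v
        have := hstar v
        omega
      -- find a nice set via claimB
      have hii2 : Odd k ∨ (NIF G).card + 1 ≤ 2 * G.edgeFinset.card := by
        by_cases hko : Odd k
        · exact Or.inl hko
        · right
          have h1 := hC hko
          have h3 : μ - 1 ≤ (p+1)*(μ-1) := Nat.le_mul_of_pos_left _ (by omega)
          omega
      obtain ⟨A0, hA0nice, hA0card⟩ := claimB G k hk (by omega) hii2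
      · -- delete A0 and recurse
        have hsum0 : ∑ a ∈ A0, G.degree a ≤ (k+1) * ((p+1)*(k+1) + (k-1)) := by
          calc ∑ a ∈ A0, G.degree a ≤ A0.card • ((p+1)*(k+1) + (k-1)) :=
              Finset.sum_le_card_nsmul _ _ _ (fun x _ => hsmall x)
          _ = (k+1) * ((p+1)*(k+1) + (k-1)) := by rw [smul_eq_mul, hA0card]
        have hdel := edge_del_le G A0
        have hNd : (NIF (delA G A0)).card + (k+1) ≤ (NIF G).card := by
          have := NIF_delA_card (nice_subset_NIF hA0nice)
          omega
        have hidB : (k+1) * ((p+1)*(k+1) + (k-1)) + 1 = (p+1)*(k+1)^2 + k*k := by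
          obtain ⟨l, rfl⟩ : ∃ l, k = l + 1 := ⟨k - 1, by omega⟩
          simp only [Nat.add_sub_cancel]
          ring
        have hidA : (p+1)*(μ-1) = p*(μ-(k+1)-1) + (μ-1) + p*(k+1) := by
          obtain ⟨w, hw⟩ : ∃ w, μ = w + (k+2) := ⟨μ - (k+2), by omega⟩
          subst hw
          have h1 : w + (k+2) - 1 = w + (k+1) := by omega
          have h2 : w + (k+2) - (k+1) - 1 = w := by omega
          rw [h1, h2]; ring
        obtain ⟨A, hdisj, hcards, hnices⟩ := ih (delA G A0) (μ - (k+1)) (by omega)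
          (by
            -- edge bound after deletion
            have hkk : k*k ≤ k^2 := by rw [pow_two]
            omega)
          (by
            intro hko
            have h1 := hC hko
            omega)
          (by
            have h1 : k + 1 ≤ (k+1)^2 := by omega
            omega)
        have hA0notin : ∀ i, Disjoint A0 (A i) := by
          intro i
          rw [Finset.disjoint_right]
          intro x hxA hxA0
          have h1 : A i ⊆ NIF (delA G A0) := nice_subset_NIF (hnices i)
          have h2 := NIF_delA G A0 (h1 hxA)
          rw [Finset.mem_sdiff] at h2
          exact h2.2 hxA0
        refine ⟨Fin.cons A0 A, cons_family_disj _ _ hdisj hA0notin, ?_, ?_⟩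
        · intro i
          rcases Fin.eq_zero_or_eq_succ i with rfl | ⟨i', rfl⟩
          · simpa using hA0card
          · simpa using hcards i'
        · intro i
          rcases Fin.eq_zero_or_eq_succ i with rfl | ⟨i', rfl⟩
          · simpa using hA0nice
          · simpa using nice_mono (fun {x y} h => delA_le h) (hnices i')


end StmtAux

theorem stmt12 {V : Type*} [Fintype V] (k n t : ℕ) (hk : 2 ≤ k) (hn : 3*k + 3 ≤ n)
    (ht : t ≤ (k*n - 2*k^2) / (k+1)^2)
    (H : SimpleGraph V) (hcard : Fintype.card V = (k*(n-1)+1) + t)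
    (he : (k*(n-1)+1) * t + t.choose 2 +
        (if Odd k then k.choose 2 + 1 else k*(n-1)/2 + 1) ≤ H.edgeSet.ncard) :
    ∃ A : Fin (t+1) → Set V,
      (Pairwise fun i j => Disjoint (A i) (A j)) ∧
      (∀ i, (A i).ncard = k + 1) ∧
      (∀ i, ∀ v ∈ A i, ∃ u ∈ A i, H.Adj v u) := by
  classical
  set R' : ℕ := (if Odd k then k.choose 2 + 1 else k*(n-1)/2 + 1) with hR'def
  have h2chk : 2 * k.choose 2 = k * (k-1) := by
    rw [Nat.choose_two_right]
    obtain ⟨c, hc⟩ := Nat.even_mul_pred_self k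
    omega
  have hB : k.choose 2 + 1 ≤ R' := by
    rw [hR'def]
    by_cases hko : Odd k
    · rw [if_pos hko]
    · rw [if_neg hko]
      have h1 : k*(k-1) ≤ k*(n-1) := Nat.mul_le_mul_left k (by omega)
      have h2 : k*(k-1)/2 ≤ k*(n-1)/2 := Nat.div_le_div_right h1
      omega
  -- edge count conversion
  have hecard : H.edgeSet.ncard = H.edgeFinset.card := by
    rw [Set.ncard_eq_toFinset_card' H.edgeSet, Set.toFinset_card]
    convert (H.edgeFinset_card).symm
  -- arithmetic facts
  have hp2 : k^2 = k*k := by ring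
  have hkn3 : k*(3*k+3) ≤ k*n := Nat.mul_le_mul_left k hn
  have hkn3' : k*(3*k+3) = 3*(k*k) + 3*k := by ring
  have hkk : k*1 ≤ k*k := Nat.mul_le_mul_left k (by omega)
  have htk1 : t * (k+1)^2 ≤ k*n - 2*k^2 := (Nat.le_div_iff_mul_le (by positivity)).1 ht
  have hknm : k*(n-1) + k = k*n := by
    have h1 : n - 1 + 1 = n := by omega
    calc k*(n-1) + k = k*((n-1)+1) := by ring
    _ = k*n := by rw [h1]
  -- identity for t*(μ-1)
  have hidT : t*((k*(n-1)+1) + t - 1) + t = t*(k*(n-1)+1) + t*t := by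
    have h1 : (k*(n-1)+1) + t - 1 = k*(n-1) + t := by omega
    rw [h1]; ring
  have h2cht : 2 * t.choose 2 + t = t*t := by
    rw [Nat.choose_two_right]
    obtain ⟨c, hc⟩ := Nat.even_mul_pred_self t
    rcases Nat.eq_zero_or_pos t with rfl | hpos
    · simp
    · have h1 : t*(t-1) + t = t*t := by
        have h2 : t - 1 + 1 = t := by omega
        calc t*(t-1) + t = t*((t-1)+1) := by ring
        _ = t*t := by rw [h2]
      omega
  obtain ⟨A, hdisj, hcards, hnices⟩ := ML k R' hk hB t H (Fintype.card V)
    (Finset.card_le_univ _)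
    (by
      have he' : (k*(n-1)+1)*t + t.choose 2 + R' ≤ H.edgeFinset.card := by
        rw [← hecard]; exact he
      rw [hcard]
      have hA1 : t*(k*(n-1)+1+t-1) + t = (k*(n-1)+1)*t + t*t := by
        have h1 : k*(n-1)+1+t-1 = k*(n-1)+t := by omega
        rw [h1]; ring
      omega)
    (by
      intro hko
      have hkeven : Even k := Nat.not_odd_iff_even.1 hko
      have hdvd : 2 ∣ k*(n-1) := (hkeven.mul_right (n-1)).two_dvd
      have h1 : k*(n-1)/2 * 2 = k*(n-1) := Nat.div_mul_cancel hdvd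
      have h2 : R' = k*(n-1)/2 + 1 := by rw [hR'def, if_neg hko]
      have h3 := Finset.card_le_univ (NIF H)
      rw [hcard] at h3
      omega)
    (by
      rw [hcard]
      omega)
  refine ⟨fun i => ↑(A i), ?_, ?_, ?_⟩
  · intro i j hij
    exact Finset.disjoint_coe.2 (hdisj i j hij)
  · intro i
    rw [Set.ncard_coe_finset]
    exact hcards i
  · intro i v hv
    obtain ⟨u, hu, hadj⟩ := hnices i v (Finset.mem_coe.1 hv)
    exact ⟨u, Finset.mem_coe.2 hu, hadj⟩
end

section
/- Let k ≥ 2, n ≥ 3, and let G be a graph with G → (K_{1,k}, K_n). If T ⊆ V(G) is such that the induced subgraph G[V(G) \ T] has maximum degree less than k, then the induced subgraph G[T] arrows (K_{1,k}, K_{n−1}): G[T] → (K_{1,k}, K_{n−1}). Consequently |T| ≥ r(K_{1,k}, K_{n−1}) = k(n−2)+1. -/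
open SimpleGraph

/-- A graph arrowing `(K_{1,k}, K_{n-1})` has at least `k(n-2)+1` vertices. -/
lemma aux_card {W : Type*} [Fintype W] (k n : ℕ) (hk : 1 ≤ k) (hn : 3 ≤ n)
    (F : SimpleGraph W) (hF : Arrows F (_root_.starGraph k) (⊤ : SimpleGraph (Fin (n-1)))) :
    k * (n-2) + 1 ≤ Fintype.card W := by
  classical
  by_contra h
  push_neg at h
  have hle : Fintype.card W ≤ Fintype.card (Fin (n-2) × Fin k) := by
    simp only [Fintype.card_prod, Fintype.card_fin]
    rw [Nat.mul_comm]
    omega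
  obtain ⟨φ⟩ := Function.Embedding.nonempty_of_card_le hle
  set R : SimpleGraph W :=
    { Adj := fun u v => F.Adj u v ∧ (φ u).1 = (φ v).1
      symm := ⟨fun u v h => ⟨h.1.symm, h.2.symm⟩⟩
      loopless := ⟨fun v h => F.irrefl h.1⟩ } with hRdef
  have hle' : R ≤ F := fun u v h => h.1
  rcases hF R hle' with ⟨f, hf⟩ | ⟨f, hf⟩
  · -- red star: impossible
    set c := f (Sum.inl 0) with hc
    have hadj : ∀ i : Fin k, R.Adj c (f (Sum.inr i)) := fun i =>
      f.map_adj (by simp [_root_.starGraph])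
    set ψ : Fin k → Fin k := fun i => (φ (f (Sum.inr i))).2 with hψ
    have hψinj : Function.Injective ψ := by
      intro i j hij
      have h1 : (φ (f (Sum.inr i))).1 = (φ (f (Sum.inr j))).1 := by
        rw [← (hadj i).2, ← (hadj j).2]
      have : φ (f (Sum.inr i)) = φ (f (Sum.inr j)) := Prod.ext h1 hij
      have := hf (φ.injective this)
      simpa using this
    have hψsurj : Function.Surjective ψ := Finite.surjective_of_injective hψinj
    obtain ⟨i, hi⟩ := hψsurj (φ c).2
    have : φ (f (Sum.inr i)) = φ c := Prod.ext (hadj i).2.symm hi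
    have := hf (φ.injective this)
    simp [hc] at this
  · -- blue K_{n-1}: impossible
    set χ : Fin (n-1) → Fin (n-2) := fun j => (φ (f j)).1 with hχ
    have hχinj : Function.Injective χ := by
      intro a b hab
      by_contra hne
      have hb := f.map_adj (show (⊤ : SimpleGraph (Fin (n-1))).Adj a b from hne)
      exact hb.2 ⟨hb.1, hab⟩
    have := Fintype.card_le_of_injective χ hχinj
    simp only [Fintype.card_fin] at this
    omega

theorem stmt15 {V : Type*} [Fintype V] (k n : ℕ) (hk : 2 ≤ k) (hn : 3 ≤ n)
    (G : SimpleGraph V) (hG : Arrows G (_root_.starGraph k) (⊤ : SimpleGraph (Fin n)))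
    (T : Set V) (hT : ∀ v ∉ T, ((G.neighborSet v) ∩ Tᶜ).ncard < k) :
    Arrows (G.induce T) (_root_.starGraph k) (⊤ : SimpleGraph (Fin (n-1))) ∧
      k*(n-2)+1 ≤ T.ncard := by
  classical
  have h1 : Arrows (G.induce T) (_root_.starGraph k) (⊤ : SimpleGraph (Fin (n-1))) := by
    intro R hR
    set R' : SimpleGraph V :=
      { Adj := fun u v => (∃ (hu : u ∈ T) (hv : v ∈ T), R.Adj ⟨u, hu⟩ ⟨v, hv⟩) ∨
          (G.Adj u v ∧ u ∉ T ∧ v ∉ T)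
        symm := by
          constructor
          rintro u v (⟨hu, hv, h⟩ | ⟨h, hu, hv⟩)
          · exact Or.inl ⟨hv, hu, h.symm⟩
          · exact Or.inr ⟨h.symm, hv, hu⟩
        loopless := by
          constructor
          rintro v (⟨hu, hv, h⟩ | ⟨h, _, _⟩)
          · exact R.irrefl h
          · exact G.irrefl h } with hR'def
    have hR'le : R' ≤ G := by
      rintro u v (⟨hu, hv, h⟩ | ⟨h, _, _⟩)
      · exact hR h
      · exact h
    rcases hG R' hR'le with ⟨f, hf⟩ | ⟨f, hf⟩
    · -- red star in R'
      set c := f (Sum.inl 0) with hc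
      have hadj : ∀ i : Fin k, R'.Adj c (f (Sum.inr i)) := fun i =>
        f.map_adj (by simp [_root_.starGraph])
      by_cases hcT : c ∈ T
      · left
        have hi : ∀ i : Fin k, ∃ hv : f (Sum.inr i) ∈ T,
            R.Adj ⟨c, hcT⟩ ⟨f (Sum.inr i), hv⟩ := by
          intro i
          rcases hadj i with ⟨hu, hv, h⟩ | ⟨_, hcn, _⟩
          · exact ⟨hv, h⟩
          · exact absurd hcT hcn
        choose hmem hradj using hi
        refine ⟨⟨Sum.elim (fun _ => (⟨c, hcT⟩ : T)) (fun i => ⟨f (Sum.inr i), hmem i⟩), ?_⟩, ?_⟩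
        · rintro (a | a) (b | b) hab
          · simp [_root_.starGraph] at hab
          · exact hradj b
          · exact (hradj a).symm
          · simp [_root_.starGraph] at hab
        · rintro (a | a) (b | b) hab
          · simp [Subsingleton.elim a b]
          · exfalso
            have : c = f (Sum.inr b) := congrArg Subtype.val hab
            have := hf this
            simp at this
          · exfalso
            have : f (Sum.inr a) = c := congrArg Subtype.val hab
            have := hf this
            simp at this
          · have : f (Sum.inr a) = f (Sum.inr b) := congrArg Subtype.val hab
            have := hf this
            simpa using this
      · exfalso
        have hmem : ∀ i : Fin k, f (Sum.inr i) ∈ G.neighborSet c ∩ Tᶜ := by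
          intro i
          rcases hadj i with ⟨hu, _, _⟩ | ⟨h, _, hv⟩
          · exact absurd hu hcT
          · exact ⟨h, hv⟩
        have hinj : Function.Injective
            (fun i : Fin k => (⟨f (Sum.inr i), hmem i⟩ : ↥(G.neighborSet c ∩ Tᶜ))) := by
          intro a b hab
          have := hf (congrArg Subtype.val hab)
          simpa using this
        have hle : k ≤ (G.neighborSet c ∩ Tᶜ).ncard := by
          rw [← Nat.card_coe_set_eq]
          have h2 := Nat.card_le_card_of_injective _ hinj
          rwa [Nat.card_eq_fintype_card, Fintype.card_fin] at h2
        exact absurd hle (not_le.mpr (hT c hcT))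
    · -- blue K_n in G \ R'
      right
      have hcompl : ∀ i j : Fin n, i ≠ j → f i ∉ T → f j ∉ T → False := by
        intro i j hij hi hj
        have hb := f.map_adj (show (⊤ : SimpleGraph (Fin n)).Adj i j from hij)
        exact hb.2 (Or.inr ⟨hb.1, hi, hj⟩)
      set s : Finset (Fin n) := Finset.univ.filter (fun i => f i ∈ T) with hs
      have hscompl : sᶜ.card ≤ 1 := by
        apply Finset.card_le_one.mpr
        intro a ha b hb
        simp only [hs, Finset.mem_compl, Finset.mem_filter, Finset.mem_univ, true_and] at ha hb
        by_contra hab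
        exact hcompl a b hab ha hb
      have hcard : n - 1 ≤ s.card := by
        have := Finset.card_add_card_compl s
        simp only [Fintype.card_fin] at this
        omega
      have hcard' : Fintype.card (Fin (n-1)) ≤ Fintype.card ↥s := by
        simpa [Fintype.card_coe] using hcard
      obtain ⟨e⟩ := Function.Embedding.nonempty_of_card_le hcard'
      have hmemT : ∀ j : Fin (n-1), f ↑(e j) ∈ T := by
        intro j
        have := (e j).2
        simp only [hs, Finset.mem_filter, Finset.mem_univ, true_and] at this
        exact this
      have hne : ∀ a b : Fin (n-1), a ≠ b → (↑(e a) : Fin n) ≠ ↑(e b) :=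
        fun a b hab h => hab (e.injective (Subtype.ext h))
      refine ⟨⟨fun j => (⟨f ↑(e j), hmemT j⟩ : T), ?_⟩, ?_⟩
      · intro a b hab
        have hab' : a ≠ b := hab
        have hb := f.map_adj (show (⊤ : SimpleGraph (Fin n)).Adj ↑(e a) ↑(e b) from hne a b hab')
        constructor
        · exact hb.1
        · intro hr
          exact hb.2 (Or.inl ⟨hmemT a, hmemT b, hr⟩)
      · intro a b hab
        have : f ↑(e a) = f ↑(e b) := congrArg Subtype.val hab
        exact e.injective (Subtype.ext (hf this))
  refine ⟨h1, ?_⟩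
  haveI : Fintype ↥T := Fintype.ofFinite ↥T
  have := aux_card k n (by omega) hn (G.induce T) h1
  rwa [← Nat.card_coe_set_eq, Nat.card_eq_fintype_card]
end

section
/- For all k, n ≥ 2, the Ramsey number of the star with k edges versus the complete graph on n vertices satisfies r(K_{1,k}, K_n) = k(n−1) + 1. -/
open SimpleGraph

/-- Greedy independent set: with all degrees `< k` and `k*t < #s + k`, `s` contains an
independent set of size `t`. -/
lemma greedy_indep {N : ℕ} (R : SimpleGraph (Fin N)) [DecidableRel R.Adj]
    (k : ℕ) (hdeg : ∀ v, R.degree v < k) :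
    ∀ (t : ℕ) (s : Finset (Fin N)), k * t < s.card + k →
      ∃ T ⊆ s, T.card = t ∧ ∀ x ∈ T, ∀ y ∈ T, ¬ R.Adj x y := by
  intro t
  induction t with
  | zero => intro s _; exact ⟨∅, by simp⟩
  | succ t ih =>
    intro s hs
    have hpos : 0 < s.card := by nlinarith [Nat.mul_le_mul_left k (Nat.zero_le t)]
    obtain ⟨v, hv⟩ := Finset.card_pos.mp hpos
    set s' := (s.erase v) \ R.neighborFinset v with hs'
    have hcard : s.card ≤ s'.card + k := by
      have h1 : (s.erase v).card - (R.neighborFinset v).card ≤ s'.card :=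
        Finset.le_card_sdiff _ _
      have h2 : (R.neighborFinset v).card < k := by
        simpa [SimpleGraph.card_neighborFinset_eq_degree] using hdeg v
      have h3 : s.card - 1 ≤ (s.erase v).card := by
        rw [Finset.card_erase_of_mem hv]
      omega
    obtain ⟨T, hTs, hTcard, hTind⟩ := ih s' (by
      have : k * (t + 1) = k * t + k := by ring
      omega)
    refine ⟨insert v T, ?_, ?_, ?_⟩
    · intro x hx
      rcases Finset.mem_insert.mp hx with rfl | hx
      · exact hv
      · exact (Finset.mem_erase.mp (Finset.mem_sdiff.mp (hTs hx)).1).2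
    · rw [Finset.card_insert_of_notMem, hTcard]
      intro hvT
      exact (Finset.mem_erase.mp (Finset.mem_sdiff.mp (hTs hvT)).1).1 rfl
    · intro x hx y hy
      have key : ∀ z ∈ T, ¬ R.Adj v z := by
        intro z hz hadj
        exact (Finset.mem_sdiff.mp (hTs hz)).2 (by simpa using hadj)
      rcases Finset.mem_insert.mp hx with hx' | hx'
      · rcases Finset.mem_insert.mp hy with hy' | hy'
        · rw [hx', hy']; exact R.irrefl
        · rw [hx']; exact key _ hy'
      · rcases Finset.mem_insert.mp hy with hy' | hy'
        · rw [hy']; exact fun h => key _ hx' h.symm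
        · exact hTind x hx' y hy'

/-- Upper bound: `K_{k(n-1)+1} ⟶ (K_{1,k}, K_n)`. -/
lemma arrows_upper (k n : ℕ) (hk : 1 ≤ k) (hn : 1 ≤ n) :
    Arrows (⊤ : SimpleGraph (Fin (k*(n-1)+1))) (_root_.starGraph k) (⊤ : SimpleGraph (Fin n)) := by
  classical
  intro R _
  by_cases hdeg : ∃ v, k ≤ R.degree v
  · left
    obtain ⟨v, hv⟩ := hdeg
    obtain ⟨t, hts, htc⟩ := Finset.exists_subset_card_eq
      (show k ≤ (R.neighborFinset v).card by
        rwa [SimpleGraph.card_neighborFinset_eq_degree])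
    set e := t.orderIsoOfFin htc with he
    have hmem : ∀ i : Fin k, R.Adj v (e i : Fin (k*(n-1)+1)) := by
      intro i
      exact (SimpleGraph.mem_neighborFinset R v _).mp (hts (e i).2)
    refine ⟨⟨Sum.elim (fun _ => v) (fun i => (e i : Fin (k*(n-1)+1))), ?_⟩, ?_⟩
    · intro a b hab
      rcases a with a | a <;> rcases b with b | b
      · exact absurd hab (by simp [_root_.starGraph])
      · exact hmem b
      · exact (hmem a).symm
      · exact absurd hab (by simp [_root_.starGraph])
    · intro a b hab
      rcases a with a | a <;> rcases b with b | b
      · simp [Subsingleton.elim a b]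
      · have hab' : v = (e b : Fin (k*(n-1)+1)) := hab
        exact absurd (hab' ▸ hmem b) R.irrefl
      · have hab' : (e a : Fin (k*(n-1)+1)) = v := hab
        exact absurd (hab'.symm ▸ hmem a) R.irrefl
      · have := e.injective (Subtype.ext hab)
        rw [this]
  · right
    push_neg at hdeg
    obtain ⟨T, _, hTcard, hTind⟩ := greedy_indep R k hdeg n Finset.univ (by
      have h1 : (Finset.univ : Finset (Fin (k*(n-1)+1))).card = k*(n-1)+1 := by simp
      have h2 : k*(n-1)+k = k*n := by
        cases n with
        | zero => omega
        | succ n => rw [Nat.succ_sub_one, ← Nat.mul_succ]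
      omega)
    set e := T.orderIsoOfFin hTcard with he
    refine ⟨⟨fun i => (e i : Fin (k*(n-1)+1)), ?_⟩, ?_⟩
    · intro a b hab
      rw [SimpleGraph.top_adj] at hab
      rw [SimpleGraph.sdiff_adj, SimpleGraph.top_adj]
      refine ⟨fun h => hab (e.injective (Subtype.ext h)), ?_⟩
      exact hTind _ (e a).2 _ (e b).2
    · intro a b hab
      exact e.injective (Subtype.ext hab)

/-- Lower bound: `K_m` does not arrow for `m ≤ k(n-1)`. -/
lemma arrows_lower (k n m : ℕ) (hk : 1 ≤ k) (hn : 2 ≤ n) (hm : m ≤ k*(n-1))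
    (h : Arrows (⊤ : SimpleGraph (Fin m)) (_root_.starGraph k) (⊤ : SimpleGraph (Fin n))) :
    False := by
  classical
  rcases h (SimpleGraph.fromRel (fun i j : Fin m => i.val / k = j.val / k)) le_top with
    ⟨f, hf⟩ | ⟨f, hf⟩
  · -- a red star: all k+1 vertices share the same `÷ k` group, but a group has ≤ k members
    have hq : ∀ x : Fin 1 ⊕ Fin k, (f x).val / k = (f (Sum.inl 0)).val / k := by
      rintro (i | i)
      · rw [Subsingleton.elim i 0]
      · have hadj := f.map_adj
          (show (_root_.starGraph k).Adj (Sum.inl 0) (Sum.inr i) by simp [_root_.starGraph])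
        rw [SimpleGraph.fromRel_adj] at hadj
        rcases hadj.2 with h1 | h1
        · exact h1.symm
        · exact h1
    have hcard : Fintype.card (Fin 1 ⊕ Fin k) ≤ Fintype.card (Fin k) := by
      refine Fintype.card_le_of_injective
        (fun x => ⟨(f x).val % k, Nat.mod_lt _ (by omega)⟩) ?_
      intro x y hxy
      apply hf
      apply Fin.ext
      have h1 : (f x).val % k = (f y).val % k := by
        simpa using congrArg Fin.val hxy
      have h2 : (f x).val / k = (f y).val / k := by rw [hq x, hq y]
      rw [← Nat.div_add_mod (f x).val k, ← Nat.div_add_mod (f y).val k, h1, h2]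
    simp only [Fintype.card_sum, Fintype.card_fin] at hcard
    omega
  · -- a blue `K_n`: its vertices lie in pairwise distinct groups, but only `n-1` groups
    have hb : ∀ x : Fin n, (f x).val / k < n - 1 := by
      intro x
      rw [Nat.div_lt_iff_lt_mul (by omega)]
      have h1 := (f x).2
      have h2 : (n-1)*k = k*(n-1) := Nat.mul_comm _ _
      omega
    have hcard : Fintype.card (Fin n) ≤ Fintype.card (Fin (n-1)) := by
      refine Fintype.card_le_of_injective (fun x => ⟨(f x).val / k, hb x⟩) ?_
      intro x y hxy
      by_contra hne
      have hadj := f.map_adj (show (⊤ : SimpleGraph (Fin n)).Adj x y by simpa using hne)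
      rw [SimpleGraph.sdiff_adj, SimpleGraph.top_adj] at hadj
      have h1 : (f x).val / k = (f y).val / k := by
        simpa using congrArg Fin.val hxy
      exact hadj.2 ((SimpleGraph.fromRel_adj _ _ _).mpr ⟨hadj.1, Or.inl h1⟩)
    simp at hcard
    omega

theorem stmt16 (k n : ℕ) (hk : 2 ≤ k) (hn : 2 ≤ n) :
    ramseyNumber (_root_.starGraph k) (⊤ : SimpleGraph (Fin n)) = k*(n-1)+1 := by
  have hmem : Arrows (⊤ : SimpleGraph (Fin (k*(n-1)+1))) (_root_.starGraph k)
      (⊤ : SimpleGraph (Fin n)) := arrows_upper k n (by omega) (by omega)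
  apply le_antisymm
  · exact Nat.sInf_le hmem
  · refine le_csInf ⟨_, hmem⟩ ?_
    intro m hm
    by_contra hlt
    push_neg at hlt
    exact arrows_lower k n m (by omega) hn (by omega) hm
end

section
/- Let k ≥ 2, n ≥ 3, and let G be a graph on k(n−1)+1+ℓ vertices with ℓ ≥ 0. Suppose the complement of G contains ℓ+1 pairwise disjoint vertex subsets A₁, …, A_{ℓ+1}, each of size k+1, such that each induced subgraph (complement of G)[A_i] has minimum degree at least 1, and suppose ℓ + 1 ≤ n − 1 and (k+1)(ℓ+1) + k(n−2−ℓ) = k(n−1)+1+ℓ. Then G does not arrow (K_{1,k}, K_n): there is a red-blue coloring of the edges of G with no red K_{1,k} and no blue K_n, obtained by partitioning V(G) into X₁ = A₁, …, X_{ℓ+1} = A_{ℓ+1} and sets X_{ℓ+2}, …, X_{n−1} of size k, coloring all edges inside each X_i red and all other edges blue. -/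
open SimpleGraph

theorem stmt17 {V : Type*} [Fintype V] (k n ℓ : ℕ) (hk : 2 ≤ k) (hn : 3 ≤ n)
    (G : SimpleGraph V) (hcard : Fintype.card V = k*(n-1)+1+ℓ)
    (hℓn : ℓ + 1 ≤ n - 1)
    (harith : (k+1)*(ℓ+1) + k*(n-2-ℓ) = k*(n-1)+1+ℓ)
    (A : Fin (ℓ+1) → Set V)
    (hdisj : Pairwise fun i j => Disjoint (A i) (A j))
    (hcardA : ∀ i, (A i).ncard = k + 1)
    (hdeg : ∀ i, ∀ v ∈ A i, ∃ u ∈ A i, Gᶜ.Adj v u) :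
    ¬ Arrows G (_root_.starGraph k) (⊤ : SimpleGraph (Fin n)) := by
  classical
  have hk0 : 0 < k := by omega
  intro harr
  set B : Set V := {v | ¬ ∃ i, v ∈ A i} with hBdef
  have hmemA : ∀ v, v ∉ B → ∃ i, v ∈ A i := fun v hv => not_not.mp hv
  -- cardinality of B
  have hU : (⋃ i, A i).ncard = (k+1)*(ℓ+1) := by
    rw [Set.ncard_eq_toFinset_card', Set.toFinset_iUnion, Finset.card_biUnion]
    · simp only [← Set.ncard_eq_toFinset_card', hcardA]
      simp [mul_comm]
    · intro i _ j _ hij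
      simpa [← Set.disjoint_toFinset] using hdisj hij
  have hUcardF : Fintype.card ↥(⋃ i, A i) = (k+1)*(ℓ+1) := by
    rw [← Set.toFinset_card, ← Set.ncard_eq_toFinset_card']; exact hU
  have hBcomp : B = (⋃ i, A i)ᶜ := by ext v; simp [hBdef]
  have hBcard : Fintype.card ↥B = k*(n-2-ℓ) := by
    have h1 : Fintype.card ↥B = Fintype.card V - Fintype.card ↥(⋃ i, A i) := by
      simp_rw [hBcomp]
      convert Fintype.card_compl_set (⋃ i, A i) using 2 <;> exact Subsingleton.elim _ _
    rw [h1, hUcardF, hcard]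
    omega
  set e : ↥B ≃ Fin (k*(n-2-ℓ)) := (Fintype.equivFin ↥B).trans (finCongr hBcard) with hedef
  set c : V → Fin (ℓ+1) ⊕ Fin (n-2-ℓ) := fun v =>
    if h : v ∈ B then Sum.inr ⟨(e ⟨v, h⟩ : ℕ)/k, Nat.div_lt_of_lt_mul (e ⟨v, h⟩).isLt⟩
    else Sum.inl (Classical.choose (hmemA v h)) with hcdef
  have hc1 : ∀ i v, v ∈ A i → c v = Sum.inl i := by
    intro i v hv
    have hvB : v ∉ B := fun hvB => hvB ⟨i, hv⟩
    have hj := Classical.choose_spec (hmemA v hvB)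
    rw [hcdef]
    simp only [dif_neg hvB]
    congr 1
    by_contra hne
    exact Set.disjoint_left.mp (hdisj hne) hj hv
  have hc2 : ∀ v i, c v = Sum.inl i → v ∈ A i := by
    intro v i hv
    by_cases hvB : v ∈ B
    · rw [hcdef] at hv; simp only [dif_pos hvB] at hv
      cases hv
    · have hj := Classical.choose_spec (hmemA v hvB)
      rw [hcdef] at hv; simp only [dif_neg hvB] at hv
      injection hv with hv
      exact hv ▸ hj
  have hc3 : ∀ v j, c v = Sum.inr j → v ∈ B := by
    intro v j hv
    by_contra hvB
    rw [hcdef] at hv; simp only [dif_neg hvB] at hv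
    cases hv
  have hc4 : ∀ v (h : v ∈ B) (j : Fin (n-2-ℓ)), c v = Sum.inr j →
      (e ⟨v, h⟩ : ℕ)/k = (j : ℕ) := by
    intro v h j hv
    rw [hcdef] at hv; simp only [dif_pos h] at hv
    injection hv with hv
    exact congrArg Fin.val hv
  -- fibers of `inr j` are small
  have hfib : ∀ j : Fin (n-2-ℓ), {v | c v = Sum.inr j}.ncard ≤ k := by
    intro j
    have hle : {v | c v = Sum.inr j}.ncard ≤ (Set.univ : Set (Fin k)).ncard := by
      apply Set.ncard_le_ncard_of_injOn
        (fun v => if h : v ∈ B then (⟨(e ⟨v, h⟩ : ℕ) % k, Nat.mod_lt _ hk0⟩ : Fin k) else ⟨0, hk0⟩)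
        (fun a _ => Set.mem_univ _) ?_ Set.finite_univ
      intro u hu w hw huw
      have hu' := hc3 u j hu
      have hw' := hc3 w j hw
      simp only [dif_pos hu', dif_pos hw'] at huw
      have h1 : (e ⟨u, hu'⟩ : ℕ) % k = (e ⟨w, hw'⟩ : ℕ) % k := congrArg Fin.val huw
      have h2 := hc4 u hu' j hu
      have h3 := hc4 w hw' j hw
      have h4 : (e ⟨u, hu'⟩ : ℕ) = (e ⟨w, hw'⟩ : ℕ) := by
        conv_lhs => rw [← Nat.div_add_mod (e ⟨u, hu'⟩ : ℕ) k]
        conv_rhs => rw [← Nat.div_add_mod (e ⟨w, hw'⟩ : ℕ) k]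
        rw [h1, h2, h3]
      have h5 : (⟨u, hu'⟩ : ↥B) = ⟨w, hw'⟩ := e.injective (Fin.ext h4)
      exact Subtype.ext_iff.mp h5
    simpa [Set.ncard_univ] using hle
  -- the red graph
  set R : SimpleGraph V :=
    { Adj := fun u v => G.Adj u v ∧ c u = c v
      symm := ⟨fun u v h => ⟨h.1.symm, h.2.symm⟩⟩
      loopless := ⟨fun v h => G.loopless.irrefl v h.1⟩ } with hRdef
  have hRadj : ∀ u v, R.Adj u v ↔ G.Adj u v ∧ c u = c v := fun u v => Iff.rfl
  rcases harr R (fun u v h => ((hRadj u v).mp h).1) with ⟨f, hf⟩ | ⟨f, hf⟩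
  · -- red star
    set x := f (Sum.inl 0) with hx
    have hadj : ∀ t : Fin k, R.Adj x (f (Sum.inr t)) := by
      intro t
      exact f.map_adj (by simp [_root_.starGraph])
    have hceq : ∀ t : Fin k, c (f (Sum.inr t)) = c x := fun t => ((hRadj _ _).mp (hadj t)).2.symm
    have hrange : (Set.range f).ncard = k + 1 := by
      rw [show (Set.range f).ncard = Nat.card ↥(Set.range f) from rfl,
        Nat.card_range_of_injective hf]
      simp only [Nat.card_eq_fintype_card, Fintype.card_sum, Fintype.card_fin]
      omega
    cases hcx : c x with
    | inr j =>
      have hsub : Set.range f ⊆ {v | c v = Sum.inr j} := by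
        rintro v ⟨s, rfl⟩
        rcases s with a | t
        · have ha : a = 0 := Subsingleton.elim _ _
          show c (f (Sum.inl a)) = Sum.inr j
          rw [ha]; exact hcx
        · show c (f (Sum.inr t)) = Sum.inr j
          rw [hceq t]; exact hcx
      have := (Set.ncard_le_ncard hsub (Set.toFinite _)).trans (hfib j)
      omega
    | inl i =>
      have hxA : x ∈ A i := hc2 x i hcx
      have hsub : Set.range f ⊆ A i := by
        rintro v ⟨s, rfl⟩
        rcases s with a | t
        · have ha : a = 0 := Subsingleton.elim _ _
          rw [ha]; exact hxA
        · exact hc2 _ i (by rw [hceq t]; exact hcx)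
      have heq : Set.range f = A i :=
        Set.eq_of_subset_of_ncard_le hsub (by rw [hcardA i, hrange]) (Set.toFinite _)
      obtain ⟨u, huA, hGu⟩ := hdeg i x hxA
      rw [compl_adj] at hGu
      rw [← heq] at huA
      obtain ⟨s, rfl⟩ := huA
      rcases s with a | t
      · have ha : a = 0 := Subsingleton.elim _ _
        rw [ha] at hGu
        exact hGu.1 rfl
      · exact hGu.2 ((hRadj _ _).mp (hadj t)).1
  · -- blue K_n
    have hlt : Fintype.card (Fin (ℓ+1) ⊕ Fin (n-2-ℓ)) < Fintype.card (Fin n) := by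
      simp only [Fintype.card_sum, Fintype.card_fin]
      omega
    obtain ⟨a, b, hab, hcab⟩ := Fintype.exists_ne_map_eq_of_card_lt (fun i => c (f i)) hlt
    have hadj : (G \ R).Adj (f a) (f b) := f.map_adj (by simpa using hab)
    rw [sdiff_adj] at hadj
    exact hadj.2 ((hRadj _ _).mpr ⟨hadj.1, hcab⟩)
end
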